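/- Let s(z) for z ∈ ℂ⁺ satisfy the equation 1/s(z) + z = 1/(1 + √(s(z)/y))² with y > 0 and s(z) ∈ ℂ⁺ (principal square root). Then as x → +∞ along the real axis, Im s(x + i0⁺) = (2/(√y)) x^{-5/2} + o(x^{-5/2}); consequently the corresponding spectral density ρ(x) = (1/π) Im s(x+i0⁺) satisfies lim_{x→∞} x^{5/2} ρ(x) = 2/(π√y). -/

import Mathlib

open Complex Filter Real

noncomputable def Wf (y : ℝ) (s : ℝ → ℂ) (x : ℝ) : ℂ := (s x / (y:ℂ)) ^ ((1:ℂ)/2)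
noncomputable def Uf (s : ℝ → ℂ) (x : ℝ) : ℂ := 1 / s x + (x:ℂ)
noncomputable def aF (y : ℝ) (s : ℝ → ℂ) (x : ℝ) : ℝ := (Wf y s x).re
noncomputable def bF (y : ℝ) (s : ℝ → ℂ) (x : ℝ) : ℝ := (Wf y s x).im
noncomputable def cF (s : ℝ → ℂ) (x : ℝ) : ℝ := x / ‖Uf s x - (x:ℂ)‖
noncomputable def qF (s : ℝ → ℂ) (x : ℝ) : ℝ := (-(Uf s x).im) / ‖Uf s x - (x:ℂ)‖

theorem key (y : ℝ) (hy : 0 < y) (s : ℝ → ℂ) (x : ℝ) (hx : 2 ≤ x)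
    (hS : 0 < (s x).im)
    (hEq : 1 / s x + (x:ℂ) = 1 / (1 + (s x / (y:ℂ)) ^ ((1:ℂ)/2)) ^ 2) :
    (0 ≤ aF y s x ∧ aF y s x ≤ Real.sqrt (1/(y*(x-1)))) ∧
    (0 ≤ bF y s x ∧ bF y s x ≤ Real.sqrt (1/(y*(x-1)))) ∧
    (0 ≤ qF s x ∧ qF s x ≤ 1/(x-1)) ∧
    (x/(x+1) ≤ cF s x ∧ cF s x ≤ x/(x-1)) ∧
    x ^ ((5:ℝ)/2) * (s x).im =
      (Real.sqrt (cF s x / y) * Real.cos (Real.arcsin (qF s x) / 2)) * (2*(1+aF y s x))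
        * (cF s x)^2 / (((1+aF y s x)^2+(bF y s x)^2)^2) := by
  have hx0 : (0:ℝ) < x := by linarith
  set S := s x with hSdef
  have hSne : S ≠ 0 := fun h => by simp [h] at hS
  set ζ : ℂ := S / (y:ℂ) with hζdef
  have hζim : 0 < ζ.im := by
    rw [hζdef, Complex.div_ofReal_im]
    positivity
  have hζne : ζ ≠ 0 := fun h => by simp [h] at hζim
  have hζabs : ‖ζ‖ = ‖S‖ / y := by
    rw [hζdef, norm_div, Complex.norm_real, Real.norm_eq_abs, abs_of_pos hy]
  -- arg of ζ
  have hargζ : ζ.arg = S.arg := by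
    have h2 : ζ = ((y⁻¹ : ℝ) : ℂ) * S := by
      push_cast
      field_simp [hζdef]
      exact hζdef
    rw [h2, Complex.arg_real_mul _ (by positivity)]
  have harg0 : 0 < S.arg := by
    rcases lt_or_eq_of_le (Complex.arg_nonneg_iff.2 hS.le) with h | h
    · exact h
    · exfalso
      have := Complex.arg_eq_zero_iff.1 h.symm
      simp [this.2] at hS
  have hargpi : S.arg < π := by
    rcases lt_or_eq_of_le (Complex.arg_le_pi S) with h | h
    · exact h
    · exfalso
      have := Complex.arg_eq_pi_iff.1 h
      simp [this.2] at hS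
  -- W components
  set W : ℂ := Wf y s x with hWdef
  have hW : W = Complex.exp (Complex.log ζ * ((1:ℂ)/2)) := by
    rw [hWdef, Wf, Complex.cpow_def_of_ne_zero hζne]
  have hWre : W.re = Real.sqrt ‖ζ‖ * Real.cos (S.arg / 2) := by
    rw [hW, Complex.exp_re]
    congr 1
    · rw [Complex.mul_re]
      simp [Complex.log_re, Real.sqrt_eq_rpow, Real.rpow_def_of_pos (norm_pos_iff.mpr hζne)]
    · rw [Complex.mul_im]
      simp [Complex.log_im, hargζ]
      ring_nf
  have hWim : W.im = Real.sqrt ‖ζ‖ * Real.sin (S.arg / 2) := by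
    rw [hW, Complex.exp_im]
    congr 1
    · rw [Complex.mul_re]
      simp [Complex.log_re, Real.sqrt_eq_rpow, Real.rpow_def_of_pos (norm_pos_iff.mpr hζne)]
    · rw [Complex.mul_im]
      simp [Complex.log_im, hargζ]
      ring_nf
  set a : ℝ := aF y s x with hadef
  set b : ℝ := bF y s x with hbdef
  have haW : a = W.re := rfl
  have hbW : b = W.im := rfl
  -- positivity of a, b
  have hcos : 0 < Real.cos (S.arg / 2) := by
    apply Real.cos_pos_of_mem_Ioo
    constructor <;> [linarith [Real.pi_pos]; linarith]
  have hsin : 0 < Real.sin (S.arg / 2) := by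
    apply Real.sin_pos_of_pos_of_lt_pi <;> [linarith; linarith [Real.pi_pos]]
  have ha0 : 0 ≤ a := by
    rw [hadef, aF, ← hWdef, hWre]
    positivity
  have hb0 : 0 ≤ b := by
    rw [hbdef, bF, ← hWdef, hWim]
    positivity
  -- U
  set U : ℂ := Uf s x with hUdef
  have hU : U = ((1 + W)^2)⁻¹ := by
    rw [hUdef, Uf, hEq, one_div, hWdef, Wf]
  have h1W : Complex.normSq (1 + W) = (1+a)^2 + b^2 := by
    rw [Complex.normSq_apply]
    simp [haW, hbW]
    ring
  have h1Wbig : 1 ≤ (1+a)^2 + b^2 := by nlinarith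
  have h1Wpos : 0 < (1+a)^2 + b^2 := by linarith
  have hUabs : ‖U‖ ≤ 1 := by
    rw [hU, norm_inv, norm_pow, Complex.sq_norm, h1W]
    rw [inv_le_one_iff₀]
    right
    exact h1Wbig
  have hUim : U.im = -(2*(1+a)*b) / (((1+a)^2+b^2)^2) := by
    rw [hU, Complex.inv_im]
    congr 1
    · congr 1
      rw [sq, Complex.mul_im]
      simp [haW, hbW]
      ring
    · rw [sq, map_mul, h1W]
      ring
  -- Z = U - x
  have hZ : U - (x:ℂ) = S⁻¹ := by
    rw [hUdef, Uf, one_div, ← hSdef]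
    ring
  set R : ℝ := ‖U - (x:ℂ)‖ with hRdef
  have hRlow : x - 1 ≤ R := by
    have h1 : ‖(x:ℂ)‖ - ‖U‖ ≤ ‖(x:ℂ) - U‖ := norm_sub_norm_le _ _
    rw [norm_sub_rev] at h1
    have h2 : ‖(x:ℂ)‖ = x := by
      rw [Complex.norm_real, Real.norm_eq_abs, abs_of_pos hx0]
    have h3 : ‖U‖ = ‖U‖ := rfl
    rw [hRdef]
    have h4 : ‖U - (x:ℂ)‖ = ‖U - (x:ℂ)‖ := rfl
    rw [h4]
    linarith [hUabs, h1, h2.le, h2.ge]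
  have hRup : R ≤ x + 1 := by
    have h1 : ‖U - (x:ℂ)‖ ≤ ‖U‖ + ‖(x:ℂ)‖ := norm_sub_le _ _
    have h2 : ‖(x:ℂ)‖ = x := by
      rw [Complex.norm_real, Real.norm_eq_abs, abs_of_pos hx0]
    have h3 : ‖U‖ = ‖U‖ := rfl
    have h4 : ‖U - (x:ℂ)‖ = ‖U - (x:ℂ)‖ := rfl
    rw [hRdef, h4]
    linarith [hUabs]
  have hRpos : 0 < R := by linarith
  -- |S| and |ζ|
  have hSeq : S = (U - (x:ℂ))⁻¹ := by rw [hZ, inv_inv]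
  have hSabs : ‖S‖ = R⁻¹ := by rw [hSeq, norm_inv, hRdef]
  have hζabs2 : ‖ζ‖ = 1 / (y * R) := by
    rw [hζabs, hSabs]
    field_simp
  -- bounds on a and b
  have hζle : ‖ζ‖ ≤ 1 / (y * (x-1)) := by
    rw [hζabs2]
    apply one_div_le_one_div_of_le
    · exact mul_pos hy (by linarith)
    · exact mul_le_mul_of_nonneg_left hRlow hy.le
  have hble : b ≤ Real.sqrt (1/(y*(x-1))) := by
    rw [hbW, hWim]
    calc Real.sqrt ‖ζ‖ * Real.sin (S.arg/2) ≤ Real.sqrt ‖ζ‖ * 1 :=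
          mul_le_mul_of_nonneg_left (Real.sin_le_one _) (Real.sqrt_nonneg _)
      _ ≤ Real.sqrt (1/(y*(x-1))) := by
          rw [mul_one]
          exact Real.sqrt_le_sqrt hζle
  have hale : a ≤ Real.sqrt (1/(y*(x-1))) := by
    rw [haW, hWre]
    calc Real.sqrt ‖ζ‖ * Real.cos (S.arg/2) ≤ Real.sqrt ‖ζ‖ * 1 :=
          mul_le_mul_of_nonneg_left (Real.cos_le_one _) (Real.sqrt_nonneg _)
      _ ≤ Real.sqrt (1/(y*(x-1))) := by
          rw [mul_one]
          exact Real.sqrt_le_sqrt hζle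
  -- b strictly positive
  have hbpos : 0 < b := by
    rw [hbW, hWim]
    exact mul_pos (Real.sqrt_pos.2 (norm_pos_iff.mpr hζne)) hsin
  -- U.im negative
  have hUimneg : U.im < 0 := by
    rw [hUim]
    apply div_neg_of_neg_of_pos
    · have h6 : 0 < 2*(1+a)*b := mul_pos (by linarith) hbpos
      linarith
    · exact pow_pos h1Wpos 2
  have hZim : (U - (x:ℂ)).im = U.im := by simp
  have hZre : (U - (x:ℂ)).re < 0 := by
    have : U.re ≤ 1 := le_trans (Complex.re_le_norm U) hUabs
    simp only [Complex.sub_re, Complex.ofReal_re]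
    linarith
  -- q bounds
  set q : ℝ := qF s x with hqdef
  have hqval : q = -U.im / R := rfl
  have hq0 : 0 ≤ q := by
    rw [hqval]
    apply div_nonneg _ hRpos.le
    linarith
  have hqle : q ≤ 1/(x-1) := by
    rw [hqval]
    apply div_le_div₀ (by linarith) _ (by linarith) hRlow
    have := Complex.abs_im_le_norm U
    have h5 : |U.im| ≤ 1 := le_trans this hUabs
    cases' abs_le.1 h5 with h6 h7
    linarith
  -- arg of S
  have hargZ : (U - (x:ℂ)).arg = Real.arcsin q - π := by
    rw [Complex.arg_of_re_neg_of_im_neg hZre (by rw [hZim]; exact hUimneg)]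
    congr 2
    rw [hqval, hRdef]
    simp
  have hargZneg : (U - (x:ℂ)).arg < 0 := Complex.arg_neg_iff.2 (by rw [hZim]; exact hUimneg)
  have hargS : S.arg = π - Real.arcsin q := by
    rw [hSeq, Complex.arg_inv, if_neg (by intro h; rw [h] at hargZneg; linarith [Real.pi_pos]), hargZ]
    ring
  have hcq : Real.cos (Real.arcsin q / 2) = Real.sin (S.arg / 2) := by
    rw [hargS]
    rw [show (π - Real.arcsin q)/2 = π/2 - Real.arcsin q/2 by ring]
    rw [Real.sin_pi_div_two_sub]
  -- S.im formula
  have hSim : S.im = (2*(1+a)*b) / ((((1+a)^2+b^2)^2) * R^2) := by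
    have gen : ∀ (N D R : ℝ), -(-N/D)/R^2 = N/(D*R^2) := by intros; ring
    rw [hSeq, Complex.inv_im, hZim, hUim, Complex.normSq_eq_norm_sq, ← hRdef]
    exact gen (2*(1+a)*b) (((1+a)^2+b^2)^2) R
  -- b formula
  have hbval : b = Real.sqrt (1/(y*R)) * Real.sin (S.arg/2) := by
    rw [hbW, hWim, hζabs2]
  -- c value
  have hcval : cF s x = x / R := rfl
  -- final identity
  refine ⟨⟨ha0, hale⟩, ⟨hb0, hble⟩, ⟨hq0, hqle⟩, ⟨?_, ?_⟩, ?_⟩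
  · rw [hcval]
    gcongr <;> linarith
  · rw [hcval]
    gcongr <;> linarith
  · rw [hSim, hcval, hcq]
    have hx52 : x ^ ((5:ℝ)/2) = Real.sqrt x * x^2 := by
      have h2 : x ^ (((2:ℕ)):ℝ) = x^2 := Real.rpow_natCast x 2
      have h12 : x ^ ((1:ℝ)/2) = Real.sqrt x := (Real.sqrt_eq_rpow x).symm
      calc x ^ ((5:ℝ)/2) = x ^ ((1:ℝ)/2 + ((2:ℕ):ℝ)) := by norm_num
        _ = x ^ ((1:ℝ)/2) * x ^ (((2:ℕ)):ℝ) := Real.rpow_add hx0 _ _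
        _ = Real.sqrt x * x^2 := by rw [h12, h2]
    have e1 : x / R / y = x * (1/(y*R)) := by
      rw [div_div, mul_one_div, mul_comm R y]
    have hsqrt1 : Real.sqrt (x / R / y) = Real.sqrt x * Real.sqrt (1/(y*R)) := by
      rw [e1, Real.sqrt_mul hx0.le]
    rw [hx52, hsqrt1]
    conv_rhs => rw [mul_assoc (Real.sqrt x), ← hbval]
    have hRne : R ≠ 0 := hRpos.ne'
    have hDne : ((1+a)^2+b^2) ≠ 0 := h1Wpos.ne'
    field_simp

set_option maxHeartbeats 1000000 in
/-- Tail asymptotic of the Stieltjes transform of the Student(3) elliptic volatility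
ensemble: Im s(x+i0⁺) = (2/√y) x^{-5/2} + o(x^{-5/2}), hence
lim_{x→∞} x^{5/2} ρ(x) = 2/(π√y). -/
theorem stmt11 (y : ℝ) (hy : 0 < y) (s : ℝ → ℂ)
    (hs : ∀ x > (0 : ℝ), 0 < (s x).im)
    (heq : ∀ x > (0 : ℝ),
      1 / s x + (x : ℂ) = 1 / (1 + (s x / (y : ℂ)) ^ ((1 : ℂ) / 2)) ^ 2) :
    Filter.Tendsto (fun x : ℝ => x ^ ((5 : ℝ) / 2) * (s x).im) Filter.atTop
      (nhds (2 / Real.sqrt y)) ∧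
    Filter.Tendsto (fun x : ℝ => x ^ ((5 : ℝ) / 2) * ((1 / Real.pi) * (s x).im)) Filter.atTop
      (nhds (2 / (Real.pi * Real.sqrt y))) := by
  have h2 : ∀ᶠ x : ℝ in atTop, (2:ℝ) ≤ x := eventually_ge_atTop 2
  have hkey : ∀ x : ℝ, 2 ≤ x →
      ((0 ≤ aF y s x ∧ aF y s x ≤ Real.sqrt (1/(y*(x-1)))) ∧
       (0 ≤ bF y s x ∧ bF y s x ≤ Real.sqrt (1/(y*(x-1)))) ∧
       (0 ≤ qF s x ∧ qF s x ≤ 1/(x-1)) ∧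
       (x/(x+1) ≤ cF s x ∧ cF s x ≤ x/(x-1)) ∧
       x ^ ((5:ℝ)/2) * (s x).im =
         (Real.sqrt (cF s x / y) * Real.cos (Real.arcsin (qF s x) / 2)) * (2*(1+aF y s x))
           * (cF s x)^2 / (((1+aF y s x)^2+(bF y s x)^2)^2)) :=
    fun x hx => key y hy s x hx (hs x (by linarith)) (heq x (by linarith))
  have hinv1 : Tendsto (fun x:ℝ => (x-1)⁻¹) atTop (nhds 0) :=
    (tendsto_atTop_add_const_right atTop (-1) tendsto_id).inv_tendsto_atTop
  have hinv2 : Tendsto (fun x:ℝ => (x+1)⁻¹) atTop (nhds 0) :=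
    (tendsto_atTop_add_const_right atTop 1 tendsto_id).inv_tendsto_atTop
  have hyx : Tendsto (fun x:ℝ => (y*(x-1))⁻¹) atTop (nhds 0) :=
    (Tendsto.const_mul_atTop hy (tendsto_atTop_add_const_right atTop (-1) tendsto_id)).inv_tendsto_atTop
  have hg : Tendsto (fun x:ℝ => Real.sqrt (1/(y*(x-1)))) atTop (nhds 0) := by
    simp only [one_div]
    have := (Real.continuous_sqrt.tendsto 0).comp hyx
    rwa [Real.sqrt_zero] at this
  have ha : Tendsto (fun x => aF y s x) atTop (nhds 0) :=
    tendsto_of_tendsto_of_tendsto_of_le_of_le' tendsto_const_nhds hg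
      (h2.mono fun x hx => ((hkey x hx).1.1))
      (h2.mono fun x hx => ((hkey x hx).1.2))
  have hb : Tendsto (fun x => bF y s x) atTop (nhds 0) :=
    tendsto_of_tendsto_of_tendsto_of_le_of_le' tendsto_const_nhds hg
      (h2.mono fun x hx => ((hkey x hx).2.1.1))
      (h2.mono fun x hx => ((hkey x hx).2.1.2))
  have hq : Tendsto (fun x => qF s x) atTop (nhds 0) := by
    refine tendsto_of_tendsto_of_tendsto_of_le_of_le' tendsto_const_nhds ?_
      (h2.mono fun x hx => ((hkey x hx).2.2.1.1))
      (h2.mono fun x hx => ((hkey x hx).2.2.1.2))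
    simpa only [one_div] using hinv1
  have hlow : Tendsto (fun x:ℝ => x/(x+1)) atTop (nhds 1) := by
    have he : (fun x:ℝ => 1 - (x+1)⁻¹) =ᶠ[atTop] (fun x:ℝ => x/(x+1)) :=
      h2.mono (fun x hx => by field_simp; ring)
    have := (tendsto_const_nhds : Tendsto (fun _:ℝ => (1:ℝ)) atTop (nhds 1)).sub hinv2
    rw [sub_zero] at this
    exact this.congr' he
  have hup : Tendsto (fun x:ℝ => x/(x-1)) atTop (nhds 1) := by
    have he : (fun x:ℝ => 1 + (x-1)⁻¹) =ᶠ[atTop] (fun x:ℝ => x/(x-1)) :=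
      h2.mono (fun x hx => by
        have : x - 1 ≠ 0 := by linarith
        field_simp; ring)
    have := (tendsto_const_nhds : Tendsto (fun _:ℝ => (1:ℝ)) atTop (nhds 1)).add hinv1
    rw [add_zero] at this
    exact this.congr' he
  have hc : Tendsto (fun x => cF s x) atTop (nhds 1) :=
    tendsto_of_tendsto_of_tendsto_of_le_of_le' hlow hup
      (h2.mono fun x hx => ((hkey x hx).2.2.2.1.1))
      (h2.mono fun x hx => ((hkey x hx).2.2.2.1.2))
  have hA1 : Tendsto (fun x => Real.sqrt (cF s x / y)) atTop (nhds (Real.sqrt (1/y))) := by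
    have h1 : Tendsto (fun x => cF s x / y) atTop (nhds (1/y)) := hc.div_const y
    exact (Real.continuous_sqrt.tendsto (1/y)).comp h1
  have hA2 : Tendsto (fun x => Real.cos (Real.arcsin (qF s x) / 2)) atTop (nhds 1) := by
    have h1 : Tendsto (fun x => Real.arcsin (qF s x)) atTop (nhds 0) := by
      have := (Real.continuous_arcsin.tendsto 0).comp hq
      rwa [Real.arcsin_zero] at this
    have h0 : Tendsto (fun x => Real.arcsin (qF s x) / 2) atTop (nhds 0) := by
      have := h1.div_const 2
      rwa [zero_div] at this
    have h3 := (Real.continuous_cos.tendsto 0).comp h0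
    rwa [Real.cos_zero] at h3
  have hF : Tendsto (fun x => (Real.sqrt (cF s x / y) * Real.cos (Real.arcsin (qF s x) / 2))
      * (2*(1+aF y s x)) * (cF s x)^2 / (((1+aF y s x)^2+(bF y s x)^2)^2)) atTop
      (nhds ((Real.sqrt (1/y) * 1) * (2*(1+0)) * 1^2 / (((1+0:ℝ)^2+(0:ℝ)^2)^2))) := by
    refine Tendsto.div ?_ ?_ (by norm_num)
    · exact ((hA1.mul hA2).mul (tendsto_const_nhds.mul (tendsto_const_nhds.add ha))).mul (hc.pow 2)
    · exact (((tendsto_const_nhds.add ha).pow 2).add (hb.pow 2)).pow 2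
  have hval : ((Real.sqrt (1/y) * 1) * (2*(1+0)) * 1^2 / (((1+0:ℝ)^2+(0:ℝ)^2)^2)) = 2 / Real.sqrt y := by
    rw [one_div, Real.sqrt_inv]
    have : Real.sqrt y ≠ 0 := by positivity
    field_simp
    norm_num
  rw [hval] at hF
  have hmain : Tendsto (fun x : ℝ => x ^ ((5 : ℝ) / 2) * (s x).im) atTop (nhds (2 / Real.sqrt y)) := by
    have hee : (fun x : ℝ => x ^ ((5:ℝ)/2) * (s x).im) =ᶠ[atTop]
        (fun x => (Real.sqrt (cF s x / y) * Real.cos (Real.arcsin (qF s x) / 2))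
          * (2*(1+aF y s x)) * (cF s x)^2 / (((1+aF y s x)^2+(bF y s x)^2)^2)) :=
      h2.mono fun x hx => ((hkey x hx).2.2.2.2)
    exact hF.congr' hee.symm
  refine ⟨hmain, ?_⟩
  have h4 := hmain.const_mul (1/Real.pi)
  have h5 : (1/Real.pi) * (2/Real.sqrt y) = 2 / (Real.pi * Real.sqrt y) := by
    field_simp
  rw [h5] at h4
  refine h4.congr (fun x => by ring)
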